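/- One has lim_{j→∞} (e/log(j+1)) · sup_{t∈(0,1)} H_j(t) = 1; that is, the maximum of H_j over (0,1) is asymptotic to (1/e)·log(j+1) as j → ∞. -/

import Mathlib

open Filter Real

private lemma log_le_div_exp {z : ℝ} (hz : 0 < z) : Real.log z ≤ z / Real.exp 1 := by
  have h := Real.log_le_sub_one_of_pos (show 0 < z / Real.exp 1 by positivity)
  rw [Real.log_div hz.ne' (Real.exp_ne_zero 1), Real.log_exp] at h
  linarith

private lemma key_ineq {c v : ℝ} (hc : 1 ≤ c) (hv : 0 < v) :
    v * Real.exp (-v) * Real.log (c / v) ≤ (Real.log c + 1) / Real.exp 1 := by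
  have hc0 : 0 < c := lt_of_lt_of_le one_pos hc
  have hlogc : 0 ≤ Real.log c := Real.log_nonneg hc
  have h1 : v ≤ Real.exp (v - 1) := by
    have := Real.add_one_le_exp (v - 1); linarith
  have hve : v * Real.exp (-v) ≤ Real.exp (-1) := by
    have h2 : Real.exp (v - 1) * Real.exp (-v) = Real.exp (-1) := by
      rw [← Real.exp_add]; ring_nf
    calc v * Real.exp (-v) ≤ Real.exp (v - 1) * Real.exp (-v) :=
          mul_le_mul_of_nonneg_right h1 (Real.exp_pos _).le
      _ = Real.exp (-1) := h2
  have hv2 : v * Real.exp (-v) * (-Real.log v) ≤ Real.exp (-1) := by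
    rcases le_or_gt 1 v with h | h
    · have hl : 0 ≤ Real.log v := Real.log_nonneg h
      have : v * Real.exp (-v) * (-Real.log v) ≤ 0 := by
        apply mul_nonpos_of_nonneg_of_nonpos
        · positivity
        · linarith
      exact this.trans (Real.exp_pos _).le
    · have hl : -Real.log v = Real.log (1 / v) := by
        rw [one_div, Real.log_inv]
      have h4 : Real.log (1 / v) ≤ (1 / v) / Real.exp 1 := log_le_div_exp (by positivity)
      have hev : Real.exp (-v) ≤ 1 := Real.exp_le_one_iff.mpr (by linarith)
      have hlnn : 0 ≤ -Real.log v := by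
        have := Real.log_neg hv h; linarith
      have h4' : -Real.log v ≤ 1 / v / Real.exp 1 := by rw [hl]; exact h4
      have hstep : v * Real.exp (-v) * (-Real.log v) ≤ v * (-Real.log v) := by
        nlinarith [mul_nonneg hv.le hlnn, Real.exp_pos (-v)]
      have h5 : v * (-Real.log v) ≤ v * (1 / v / Real.exp 1) :=
        mul_le_mul_of_nonneg_left h4' hv.le
      have h6 : v * (1 / v / Real.exp 1) = Real.exp (-1) := by
        rw [Real.exp_neg]; field_simp
      linarith
  have hsplit : Real.log (c / v) = Real.log c - Real.log v := Real.log_div hc0.ne' hv.ne'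
  have hmul := mul_le_mul_of_nonneg_right hve hlogc
  have hexp : (Real.log c + 1) / Real.exp 1 = (Real.log c + 1) * Real.exp (-1) := by
    rw [Real.exp_neg, div_eq_mul_inv]
  have expand : v * Real.exp (-v) * (Real.log c - Real.log v)
      = v * Real.exp (-v) * Real.log c + v * Real.exp (-v) * (-Real.log v) := by ring
  rw [hsplit, hexp, expand]
  nlinarith [hmul, hv2]

private lemma pointwise_upper (j : ℕ) (hj : 2 ≤ j) {t : ℝ} (ht0 : 0 < t) (ht1 : t < 1) :
    (j : ℝ) * t ^ (j - 1) * (1 - t) * Real.log (3 / (1 - t)) ≤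
      (j : ℝ) / ((j : ℝ) - 1) * ((Real.log (3 * ((j : ℝ) - 1)) + 1) / Real.exp 1) := by
  have hJ : (2 : ℝ) ≤ (j : ℝ) := by exact_mod_cast hj
  set u : ℝ := 1 - t with hu
  have hu0 : 0 < u := by simp only [hu]; linarith
  have hu1 : u < 1 := by simp only [hu]; linarith
  have hncast : ((j - 1 : ℕ) : ℝ) = (j : ℝ) - 1 := by
    have h1 : 1 ≤ j := by omega
    push_cast [h1]; ring
  set v : ℝ := ((j : ℝ) - 1) * u with hvdef
  have hv0 : 0 < v := by
    apply mul_pos _ hu0; linarith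
  have hpow : t ^ (j - 1) ≤ Real.exp (-v) := by
    have h1 : t ≤ Real.exp (-u) := by
      have := Real.add_one_le_exp (-u); simp only [hu] at *; linarith
    calc t ^ (j - 1) ≤ Real.exp (-u) ^ (j - 1) := pow_le_pow_left₀ ht0.le h1 _
      _ = Real.exp (((j - 1 : ℕ) : ℝ) * (-u)) := (Real.exp_nat_mul _ _).symm
      _ = Real.exp (-v) := by rw [hncast, hvdef]; ring_nf
  have hlogpos : 0 ≤ Real.log (3 / u) := Real.log_nonneg (by rw [le_div_iff₀ hu0]; linarith)
  have h2 : (j : ℝ) * t ^ (j - 1) * u * Real.log (3 / u) ≤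
      (j : ℝ) * Real.exp (-v) * u * Real.log (3 / u) := by
    have hJ0 : (0 : ℝ) ≤ (j : ℝ) := by linarith
    have : t ^ (j-1) * ((j:ℝ) * u * Real.log (3/u)) ≤ Real.exp (-v) * ((j:ℝ) * u * Real.log (3/u)) := by
      apply mul_le_mul_of_nonneg_right hpow; positivity
    nlinarith [this]
  have hne0 : (j : ℝ) - 1 ≠ 0 := by linarith
  have h3u : 3 / u = 3 * ((j : ℝ) - 1) / v := by
    rw [hvdef]; field_simp
  have h3 : (j : ℝ) * Real.exp (-v) * u * Real.log (3 / u)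
      = (j : ℝ) / ((j : ℝ) - 1) * (v * Real.exp (-v) * Real.log (3 * ((j : ℝ) - 1) / v)) := by
    rw [h3u, hvdef]
    have hne : (j : ℝ) - 1 ≠ 0 := by linarith
    field_simp
  have hc1 : (1 : ℝ) ≤ 3 * ((j : ℝ) - 1) := by linarith
  have hkey := key_ineq hc1 hv0
  calc (j : ℝ) * t ^ (j - 1) * u * Real.log (3 / u)
      ≤ (j : ℝ) * Real.exp (-v) * u * Real.log (3 / u) := h2
    _ = (j : ℝ) / ((j : ℝ) - 1) * (v * Real.exp (-v) * Real.log (3 * ((j : ℝ) - 1) / v)) := h3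
    _ ≤ (j : ℝ) / ((j : ℝ) - 1) * ((Real.log (3 * ((j : ℝ) - 1)) + 1) / Real.exp 1) := by
        apply mul_le_mul_of_nonneg_left hkey
        exact div_nonneg (by linarith) (by linarith)

theorem stmt_7 :
    Filter.Tendsto
      (fun j : ℕ => Real.exp 1 / Real.log ((j : ℝ) + 1) *
        sSup ((fun t : ℝ => (j : ℝ) * t ^ (j - 1) * (1 - t) * Real.log (3 / (1 - t))) ''
          Set.Ioo (0 : ℝ) 1))
      Filter.atTop (nhds 1) := by
  set F : ℕ → ℝ → ℝ := fun j t => (j : ℝ) * t ^ (j - 1) * (1 - t) * Real.log (3 / (1 - t)) with hF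
  set B : ℕ → ℝ := fun j => (j : ℝ) / ((j : ℝ) - 1) * ((Real.log (3 * ((j : ℝ) - 1)) + 1) / Real.exp 1) with hB
  have hbdd : ∀ j : ℕ, 2 ≤ j → ∀ x ∈ F j '' Set.Ioo (0:ℝ) 1, x ≤ B j := by
    rintro j hj x ⟨t, ht, rfl⟩
    exact pointwise_upper j hj ht.1 ht.2
  have hnonempty : ∀ j : ℕ, (F j '' Set.Ioo (0:ℝ) 1).Nonempty :=
    fun j => ⟨F j (1/2), ⟨1/2, by norm_num, rfl⟩⟩
  have hub : ∀ j : ℕ, 2 ≤ j → sSup (F j '' Set.Ioo (0:ℝ) 1) ≤ B j :=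
    fun j hj => csSup_le (hnonempty j) (hbdd j hj)
  have hlb : ∀ j : ℕ, 2 ≤ j →
      (1 - 1/(j:ℝ)) ^ (j - 1) * Real.log (3 * (j:ℝ)) ≤ sSup (F j '' Set.Ioo (0:ℝ) 1) := by
    intro j hj
    have hJ : (2 : ℝ) ≤ (j : ℝ) := by exact_mod_cast hj
    have hJ0 : (0:ℝ) < (j:ℝ) := by linarith
    have ht0mem : (1 - 1/(j:ℝ)) ∈ Set.Ioo (0:ℝ) 1 := by
      constructor
      · have : 1/(j:ℝ) < 1 := by rw [div_lt_one hJ0]; linarith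
        linarith
      · have : 0 < 1/(j:ℝ) := by positivity
        linarith
    have hmem : F j (1 - 1/(j:ℝ)) ∈ F j '' Set.Ioo (0:ℝ) 1 := ⟨_, ht0mem, rfl⟩
    have hval : F j (1 - 1/(j:ℝ)) = (1 - 1/(j:ℝ)) ^ (j - 1) * Real.log (3 * (j:ℝ)) := by
      simp only [hF]
      have h1 : 1 - (1 - 1/(j:ℝ)) = 1/(j:ℝ) := by ring
      rw [h1]
      have h2 : 3 / (1/(j:ℝ)) = 3 * (j:ℝ) := by field_simp
      rw [h2]
      field_simp
    rw [← hval]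
    exact le_csSup ⟨B j, hbdd j hj⟩ hmem
  -- auxiliary limits
  have hlogtop : Tendsto (fun j : ℕ => Real.log ((j:ℝ) + 1)) atTop atTop :=
    Real.tendsto_log_atTop.comp (tendsto_atTop_add_const_right _ 1 tendsto_natCast_atTop_atTop)
  have hinvJ : Tendsto (fun j : ℕ => 1/(j:ℝ)) atTop (nhds 0) := tendsto_one_div_atTop_nhds_zero_nat
  have hinvJ1 : Tendsto (fun j : ℕ => 1/((j:ℝ)+1)) atTop (nhds 0) := by
    have h := tendsto_inv_atTop_zero.comp
      (tendsto_atTop_add_const_right atTop (1:ℝ) tendsto_natCast_atTop_atTop)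
    simpa [one_div, Function.comp_def] using h
  have hinvJm1 : Tendsto (fun j : ℕ => 1/((j:ℝ)-1)) atTop (nhds 0) := by
    have h := tendsto_inv_atTop_zero.comp
      (tendsto_atTop_add_const_right atTop (-1:ℝ) tendsto_natCast_atTop_atTop)
    simpa [one_div, Function.comp_def, sub_eq_add_neg] using h
  -- P : (1 - 1/j)^(j-1) → exp(-1)
  have base : Tendsto (fun j : ℕ => (1 - 1/(j:ℝ)) ^ j) atTop (nhds (Real.exp (-1))) := by
    have h := Real.tendsto_one_add_div_pow_exp (-1)
    refine h.congr fun j => ?_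
    norm_num [sub_eq_add_neg, neg_div]
  have denom : Tendsto (fun j : ℕ => 1 - 1/(j:ℝ)) atTop (nhds 1) := by
    have := ((tendsto_const_nhds : Filter.Tendsto (fun _ : ℕ => (1:ℝ)) atTop (nhds 1)).sub hinvJ)
    simpa using this
  have P : Tendsto (fun j : ℕ => (1 - 1/(j:ℝ)) ^ (j - 1)) atTop (nhds (Real.exp (-1))) := by
    have hdiv := base.div denom one_ne_zero
    rw [div_one] at hdiv
    refine hdiv.congr' ?_
    filter_upwards [eventually_ge_atTop 2] with j hj
    have hJ : (2:ℝ) ≤ (j:ℝ) := by exact_mod_cast hj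
    have hlt : 1/(j:ℝ) < 1 := by rw [div_lt_one (by linarith)]; linarith
    have hne : (1 - 1/(j:ℝ)) ≠ 0 := by linarith
    have hpow : (1 - 1/(j:ℝ)) ^ j = (1 - 1/(j:ℝ)) ^ (j - 1) * (1 - 1/(j:ℝ)) := by
      rw [← pow_succ]; congr 1; omega
    simp only [Pi.div_apply]
    rw [hpow, mul_div_assoc, div_self hne, mul_one]
  -- Q : log(3j)/log(j+1) → 1
  have hratio : Tendsto (fun j : ℕ => 3*(j:ℝ)/((j:ℝ)+1)) atTop (nhds 3) := by
    have h : Tendsto (fun j : ℕ => 3 - 3 * (1/((j:ℝ)+1))) atTop (nhds 3) := by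
      have := ((tendsto_const_nhds : Filter.Tendsto (fun _ : ℕ => (3:ℝ)) atTop (nhds 3)).sub (hinvJ1.const_mul 3))
      simpa using this
    refine h.congr fun j => ?_
    have hpos : (0:ℝ) < (j:ℝ)+1 := by positivity
    field_simp
    ring
  have hlog3J : Tendsto (fun j : ℕ => Real.log (3*(j:ℝ)/((j:ℝ)+1))) atTop (nhds (Real.log 3)) :=
    ((Real.continuousAt_log (by norm_num)).tendsto.comp hratio)
  have Q : Tendsto (fun j : ℕ => Real.log (3*(j:ℝ)) / Real.log ((j:ℝ)+1)) atTop (nhds 1) := by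
    have hnum := hlog3J.div_atTop hlogtop
    have h := ((tendsto_const_nhds : Filter.Tendsto (fun _ : ℕ => (1:ℝ)) atTop (nhds 1)).add hnum)
    rw [add_zero] at h
    refine (h.congr' ?_ : _)
    filter_upwards [eventually_ge_atTop 1] with j hj
    have hJ : (1:ℝ) ≤ (j:ℝ) := by exact_mod_cast hj
    have hlogne : Real.log ((j:ℝ)+1) ≠ 0 := ne_of_gt (Real.log_pos (by linarith))
    rw [Real.log_div (by positivity) (by positivity)]
    field_simp
    ring
  -- R1 : j/(j-1) → 1
  have R1 : Tendsto (fun j : ℕ => (j:ℝ)/((j:ℝ)-1)) atTop (nhds 1) := by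
    have h := ((tendsto_const_nhds : Filter.Tendsto (fun _ : ℕ => (1:ℝ)) atTop (nhds 1)).add hinvJm1)
    rw [add_zero] at h
    refine h.congr' ?_
    filter_upwards [eventually_ge_atTop 2] with j hj
    have hJ : (2:ℝ) ≤ (j:ℝ) := by exact_mod_cast hj
    have hne : (j:ℝ) - 1 ≠ 0 := by linarith
    field_simp
    ring
  -- R2 : (log(3(j-1)) + 1)/log(j+1) → 1
  have hratio2 : Tendsto (fun j : ℕ => 3*((j:ℝ)-1)/((j:ℝ)+1)) atTop (nhds 3) := by
    have h : Tendsto (fun j : ℕ => 3 - 6 * (1/((j:ℝ)+1))) atTop (nhds 3) := by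
      have := ((tendsto_const_nhds : Filter.Tendsto (fun _ : ℕ => (3:ℝ)) atTop (nhds 3)).sub (hinvJ1.const_mul 6))
      simpa using this
    refine h.congr fun j => ?_
    have hpos : (0:ℝ) < (j:ℝ)+1 := by positivity
    field_simp
    ring
  have hlog3Jm : Tendsto (fun j : ℕ => Real.log (3*((j:ℝ)-1)/((j:ℝ)+1))) atTop (nhds (Real.log 3)) :=
    ((Real.continuousAt_log (by norm_num)).tendsto.comp hratio2)
  have R2 : Tendsto (fun j : ℕ => (Real.log (3*((j:ℝ)-1)) + 1) / Real.log ((j:ℝ)+1)) atTop (nhds 1) := by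
    have hnum := (hlog3Jm.add_const 1).div_atTop hlogtop
    have h := ((tendsto_const_nhds : Filter.Tendsto (fun _ : ℕ => (1:ℝ)) atTop (nhds 1)).add hnum)
    rw [add_zero] at h
    refine h.congr' ?_
    filter_upwards [eventually_ge_atTop 2] with j hj
    have hJ : (2:ℝ) ≤ (j:ℝ) := by exact_mod_cast hj
    have hlogne : Real.log ((j:ℝ)+1) ≠ 0 := ne_of_gt (Real.log_pos (by linarith))
    rw [Real.log_div (ne_of_gt (by linarith : (0:ℝ) < 3*((j:ℝ)-1))) (ne_of_gt (by linarith : (0:ℝ) < (j:ℝ)+1))]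
    field_simp
    ring
  -- lower and upper sequences
  have hlo : Tendsto (fun j : ℕ => Real.exp 1 / Real.log ((j:ℝ)+1) *
      ((1 - 1/(j:ℝ)) ^ (j - 1) * Real.log (3*(j:ℝ)))) atTop (nhds 1) := by
    have h := ((((tendsto_const_nhds : Filter.Tendsto (fun _ : ℕ => Real.exp 1) atTop (nhds (Real.exp 1))).mul P).mul Q) :
      Tendsto (fun j : ℕ => (Real.exp 1 * (1 - 1/(j:ℝ)) ^ (j-1)) *
        (Real.log (3*(j:ℝ)) / Real.log ((j:ℝ)+1))) atTop (nhds ((Real.exp 1 * Real.exp (-1)) * 1)))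
    have he : Real.exp 1 * Real.exp (-1) * 1 = 1 := by
      rw [← Real.exp_add]; norm_num
    rw [he] at h
    refine h.congr fun j => ?_
    ring
  have hhi : Tendsto (fun j : ℕ => (j:ℝ)/((j:ℝ)-1) *
      ((Real.log (3*((j:ℝ)-1)) + 1) / Real.log ((j:ℝ)+1))) atTop (nhds 1) := by
    have h := R1.mul R2
    rw [mul_one] at h
    exact h
  -- squeeze
  apply tendsto_of_tendsto_of_tendsto_of_le_of_le' hlo hhi
  · filter_upwards [eventually_ge_atTop 2] with j hj
    have hJ : (2:ℝ) ≤ (j:ℝ) := by exact_mod_cast hj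
    have hc : 0 ≤ Real.exp 1 / Real.log ((j:ℝ)+1) := by
      have := Real.log_pos (show (1:ℝ) < (j:ℝ)+1 by linarith)
      positivity
    exact mul_le_mul_of_nonneg_left (hlb j hj) hc
  · filter_upwards [eventually_ge_atTop 2] with j hj
    have hJ : (2:ℝ) ≤ (j:ℝ) := by exact_mod_cast hj
    have hlogpos := Real.log_pos (show (1:ℝ) < (j:ℝ)+1 by linarith)
    have hc : 0 ≤ Real.exp 1 / Real.log ((j:ℝ)+1) := by positivity
    have h1 := mul_le_mul_of_nonneg_left (hub j hj) hc
    refine h1.trans_eq ?_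
    simp only [hB]
    have hne1 : (j:ℝ) - 1 ≠ 0 := by linarith
    have hne2 : Real.log ((j:ℝ)+1) ≠ 0 := ne_of_gt hlogpos
    field_simp
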